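/- Let Q = 𝔭_q(g,f) be a candidate with deg f > deg g, L the splitting field of q over F, and α ∈ L a root of q. Then Q is irreducible over F if and only if f - αg is irreducible over L. -/

import Mathlib

open Polynomial

attribute [local instance] PrincipalIdealRing.to_uniqueFactorizationMonoid

/-- The homogenization `𝔭_q(g,f) = ∑ q_i f^i g^(m-i)` where `m = deg q`. -/
noncomputable def homog {F : Type*} [Field F] (q g f : Polynomial F) : Polynomial F :=
  ∑ i ∈ Finset.range (q.natDegree + 1), C (q.coeff i) * f ^ i * g ^ (q.natDegree - i)

lemma homogAux {R : Type*} [CommRing R] [Nontrivial R] (f g : R[X]) (s : Multiset R) :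
    ∑ i ∈ Finset.range (Multiset.card s + 1),
      C ((s.map (fun β => X - C β)).prod.coeff i) * f ^ i * g ^ (Multiset.card s - i)
      = (s.map (fun β => f - C β * g)).prod := by
  induction s using Multiset.induction with
  | empty => simp
  | cons β s ih =>
    set n := Multiset.card s with hn
    set p := (s.map (fun β => X - C β)).prod with hp
    have hcard : Multiset.card (β ::ₘ s) = n + 1 := by simp [hn]
    have hprod : ((β ::ₘ s).map (fun β => X - C β)).prod = (X - C β) * p := by
      simp [hp]
    have hdeg : p.natDegree = n := by
      rw [hp, natDegree_multiset_prod_of_monic]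
      · simp [Multiset.map_map, Function.comp_def, natDegree_X_sub_C, hn]
      · intro h hh
        obtain ⟨a, _, rfl⟩ := Multiset.mem_map.mp hh
        exact monic_X_sub_C a
    have hcoeff : ∀ i, ((X - C β) * p).coeff (i + 1) = p.coeff i - β * p.coeff (i + 1) := by
      intro i
      rw [sub_mul, coeff_sub, coeff_X_mul, coeff_C_mul]
    have hcoeff0 : ((X - C β) * p).coeff 0 = -(β * p.coeff 0) := by
      rw [sub_mul, coeff_sub, coeff_C_mul, mul_coeff_zero, coeff_X_zero, zero_mul, zero_sub]
    rw [hcard, hprod, Multiset.map_cons, Multiset.prod_cons, ← ih]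
    rw [Finset.sum_range_succ']
    set S := ∑ i ∈ Finset.range (n + 1), C (p.coeff i) * f ^ i * g ^ (n - i) with hS
    have e1 : ∀ i ∈ Finset.range (n + 1),
        C (((X - C β) * p).coeff (i + 1)) * f ^ (i + 1) * g ^ (n + 1 - (i + 1))
          = C (p.coeff i) * f ^ (i + 1) * g ^ (n - i)
            - C β * (C (p.coeff (i + 1)) * f ^ (i + 1) * g ^ (n - i)) := by
      intro i _
      rw [hcoeff i, Nat.succ_sub_succ, map_sub, map_mul]
      ring
    rw [Finset.sum_congr rfl e1, Finset.sum_sub_distrib]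
    have e2 : ∑ i ∈ Finset.range (n + 1), C (p.coeff i) * f ^ (i + 1) * g ^ (n - i) = f * S := by
      rw [hS, Finset.mul_sum]; exact Finset.sum_congr rfl fun i _ => by ring
    have h4 : ∑ i ∈ Finset.range (n + 1), C (p.coeff i) * f ^ i * g ^ (n + 1 - i)
        = ∑ i ∈ Finset.range (n + 1), C (p.coeff (i + 1)) * f ^ (i + 1) * g ^ (n - i)
          + C (p.coeff 0) * f ^ 0 * g ^ (n + 1) := by
      have h5 : ∑ i ∈ Finset.range (n + 2), C (p.coeff i) * f ^ i * g ^ (n + 1 - i)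
          = ∑ i ∈ Finset.range (n + 1), C (p.coeff i) * f ^ i * g ^ (n + 1 - i) := by
        rw [Finset.sum_range_succ, coeff_eq_zero_of_natDegree_lt (by omega : p.natDegree < n + 1)]
        simp
      rw [← h5, Finset.sum_range_succ']
      congr 1
      exact Finset.sum_congr rfl fun i _ => by rw [Nat.succ_sub_succ]
    have h6 : ∑ i ∈ Finset.range (n + 1), C (p.coeff i) * f ^ i * g ^ (n + 1 - i) = g * S := by
      rw [hS, Finset.mul_sum]
      refine Finset.sum_congr rfl fun i hi => ?_
      have : n + 1 - i = (n - i) + 1 := by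
        have := Finset.mem_range.mp hi; omega
      rw [this]; ring
    have key : ∑ i ∈ Finset.range (n + 1), C (p.coeff (i + 1)) * f ^ (i + 1) * g ^ (n - i)
        + C (p.coeff 0) * f ^ 0 * g ^ (n + 1) = g * S := by
      rw [← h4, h6]
    have e3 : ∑ i ∈ Finset.range (n + 1), C β * (C (p.coeff (i + 1)) * f ^ (i + 1) * g ^ (n - i))
          - C (((X - C β) * p).coeff 0) * f ^ 0 * g ^ (n + 1 - 0)
        = C β * g * S := by
      rw [hcoeff0, ← Finset.mul_sum]
      have hterm : C (-(β * p.coeff 0)) * f ^ 0 * g ^ (n + 1 - 0)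
          = -(C β * (C (p.coeff 0) * f ^ 0 * g ^ (n + 1))) := by
        simp only [map_neg, map_mul, pow_zero, Nat.sub_zero]; ring
      rw [hterm, sub_neg_eq_add, ← mul_add, key, ← mul_assoc]
    rw [e2, sub_add, e3]
    ring

lemma natDegree_pos_of_not_isUnit {K : Type*} [Field K] {p : K[X]}
    (h0 : p ≠ 0) (hu : ¬ IsUnit p) : 0 < p.natDegree := by
  rcases Nat.eq_zero_or_pos p.natDegree with h | h
  · exact absurd (isUnit_iff_degree_eq_zero.mpr (by rw [degree_eq_natDegree h0, h]; rfl)) hu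
  · exact h

lemma homog_map {F L : Type*} [Field F] [Field L] (ι : F →+* L) (q f g : F[X])
    (hqm : q.Monic) (hsp : Splits (q.map ι)) :
    (homog q g f).map ι
      = (((q.map ι).roots).map (fun β => f.map ι - C β * g.map ι)).prod := by
  have hcard : Multiset.card (q.map ι).roots = q.natDegree := by
    rw [splits_iff_card_roots.mp hsp, natDegree_map]
  have hqeq : q.map ι = (((q.map ι).roots).map (fun β => X - C β)).prod :=
    hsp.eq_prod_roots_of_monic (hqm.map ι)
  set s := (q.map ι).roots with hs
  unfold homog
  rw [Polynomial.map_sum]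
  have e : ∀ i ∈ Finset.range (q.natDegree + 1),
      (C (q.coeff i) * f ^ i * g ^ (q.natDegree - i)).map ι
        = C ((q.map ι).coeff i) * (f.map ι) ^ i * (g.map ι) ^ (q.natDegree - i) := by
    intro i _
    rw [Polynomial.map_mul, Polynomial.map_mul, Polynomial.map_pow, Polynomial.map_pow,
      map_C, coeff_map]
  rw [Finset.sum_congr rfl e]
  rw [show q.map ι = ((s.map (fun β => X - C β)).prod) from hqeq, ← hcard]
  exact homogAux _ _ s

theorem homog_irreducible_iff {F L : Type*} [Field F] [Finite F]
    [Field L] [Algebra F L] (q f g : Polynomial F)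
    (hqm : q.Monic) (hq : Irreducible q) (hdq : 1 ≤ q.natDegree)
    (hfg : IsCoprime f g) (hdeg : g.natDegree < f.natDegree)
    (hL : Polynomial.IsSplittingField F L q) (α : L) (hα : Polynomial.aeval α q = 0) :
    Irreducible (homog q g f) ↔
      Irreducible (f.map (algebraMap F L) - C α * g.map (algebraMap F L)) := by
  haveI := hL
  haveI : FiniteDimensional F L := IsSplittingField.finiteDimensional L q
  haveI : Finite L := Module.finite_of_finite F
  set ι := algebraMap F L with hι
  set fL := f.map ι with hfL
  set gL := g.map ι with hgL
  set s := (q.map ι).roots with hs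
  set Q := homog q g f with hQ
  have hq0 : q ≠ 0 := hqm.ne_zero
  have hsep : q.Separable := PerfectField.separable_of_irreducible hq
  have hf1 : 1 ≤ f.natDegree := by omega
  have hf0 : f ≠ 0 := fun h => by rw [h, natDegree_zero] at hf1; omega
  have hsplits : Splits (q.map ι) := IsSplittingField.splits L q
  have hmapne : q.map ι ≠ 0 := Polynomial.map_ne_zero hq0
  have hE : Q.map ι = (s.map (fun β => fL - C β * gL)).prod := homog_map ι q f g hqm hsplits
  have hcard : Multiset.card s = q.natDegree := by
    rw [hs, splits_iff_card_roots.mp hsplits, natDegree_map]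
  have hnodup : s.Nodup := nodup_roots hsep.map
  have hroot : ∀ β ∈ s, aeval β q = 0 := by
    intro β hβ
    have := (mem_roots'.mp hβ).2
    rwa [IsRoot, eval_map, ← aeval_def] at this
  have hαs : α ∈ s := by
    rw [hs, mem_roots']
    exact ⟨hmapne, by rw [IsRoot, eval_map, ← aeval_def]; exact hα⟩
  -- degrees of the factors
  have hdegfactor : ∀ β : L, (fL - C β * gL).natDegree = f.natDegree := by
    intro β
    have h2 : gL.degree < fL.degree := by
      rw [hfL, hgL, degree_map, degree_map]
      exact degree_lt_degree hdeg
    have h1 : (C β * gL).degree < fL.degree := by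
      refine lt_of_le_of_lt (le_trans (degree_mul_le _ _) ?_) h2
      exact add_le_of_nonpos_left degree_C_le
    have h3 := degree_sub_eq_left_of_degree_lt h1
    rw [← natDegree_map (p := f) ι, ← hfL]
    exact natDegree_eq_of_degree_eq h3
  have hfactor0 : ∀ β : L, fL - C β * gL ≠ 0 := by
    intro β h
    have := hdegfactor β
    rw [h, natDegree_zero] at this
    omega
  -- coprimality of distinct factors
  have hCunit : ∀ (c : L), c ≠ 0 → ∀ x : L[X], IsCoprime x (C c) :=
    fun c hc x => ⟨0, C c⁻¹, by rw [zero_mul, zero_add, ← map_mul, inv_mul_cancel₀ hc, map_one]⟩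
  have hcop : ∀ β γ : L, β ≠ γ → IsCoprime (fL - C β * gL) (fL - C γ * gL) := by
    intro β γ hne
    have h0 : IsCoprime fL gL := hfg.map (mapRingHom ι)
    have h1 : IsCoprime (fL - C β * gL) gL := by
      have h1 := h0.add_mul_left_left (-C β)
      rwa [show fL + gL * -C β = fL - C β * gL by ring] at h1
    have h2 : IsCoprime (fL - C β * gL) (C (β - γ) * gL) :=
      (hCunit (β - γ) (sub_ne_zero.mpr hne) _).mul_right h1
    have h3 := h2.add_mul_left_right 1
    rwa [mul_one, show C (β - γ) * gL + (fL - C β * gL) = fL - C γ * gL by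
      rw [map_sub]; ring] at h3
  -- transitivity of the Galois action on roots
  have hconj : ∀ β ∈ s, ∀ γ ∈ s, ∃ σ : L ≃ₐ[F] L, σ β = γ := by
    intro β hβ γ hγ
    have halg : IsAlgebraic F β := ⟨q, hq0, hroot β hβ⟩
    refine minpoly.exists_algEquiv_of_root' halg ?_
    rw [← minpoly.eq_of_irreducible_of_monic hq (hroot β hβ) hqm]
    exact hroot γ hγ
  -- the action of automorphisms on factors
  have hcomm : ∀ σ : L ≃ₐ[F] L, ((σ : L →+* L)).comp ι = ι :=
    fun σ => RingHom.ext fun x => σ.commutes x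
  have hmapσ : ∀ (σ : L ≃ₐ[F] L) (β : L),
      (fL - C β * gL).map (σ : L →+* L) = fL - C (σ β) * gL := by
    intro σ β
    rw [Polynomial.map_sub, Polynomial.map_mul, map_C, hfL, hgL, Polynomial.map_map,
      Polynomial.map_map, hcomm σ]
    rfl
  have hirrfactor : Irreducible (fL - C α * gL) → ∀ β ∈ s, Irreducible (fL - C β * gL) := by
    intro h1 β hβ
    obtain ⟨σ, hσ⟩ := hconj α hαs β hβ
    have := (MulEquiv.irreducible_iff (Polynomial.mapEquiv (σ : L ≃+* L))).mpr h1
    rwa [mapEquiv_apply, show ((σ : L ≃+* L) : L →+* L) = (σ : L →+* L) from rfl,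
      hmapσ σ α, hσ] at this
  -- degree of Q
  have hdegQ : Q.natDegree = q.natDegree * f.natDegree := by
    have h1 : (Q.map ι).natDegree = Q.natDegree := natDegree_map ι
    rw [← h1, hE, natDegree_multiset_prod]
    · rw [Multiset.map_map]
      have : (s.map (natDegree ∘ fun β => fL - C β * gL)) = s.map (fun _ => f.natDegree) :=
        Multiset.map_congr rfl fun β _ => hdegfactor β
      rw [this, Multiset.map_const', Multiset.sum_replicate, smul_eq_mul, hcard]
    · intro h
      obtain ⟨β, _, hβ⟩ := Multiset.mem_map.mp h
      exact hfactor0 β hβ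
  have hQ0 : Q ≠ 0 := by
    intro h
    rw [h, natDegree_zero] at hdegQ
    have : 1 ≤ q.natDegree * f.natDegree := Nat.one_le_iff_ne_zero.mpr
      (Nat.mul_ne_zero (by omega) (by omega))
    omega
  constructor
  · intro h1
    have hint : IsIntegral F α := ⟨q, hqm, by rwa [← aeval_def]⟩
    have hmin : minpoly F α = q := (minpoly.eq_of_irreducible_of_monic hq hα hqm).symm
    have htop : IntermediateField.adjoin F {α} = ⊤ := by
      have hnorm : Normal F (IntermediateField.adjoin F {α}) := inferInstance
      have hgen : minpoly F (IntermediateField.AdjoinSimple.gen F α) = q := by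
        rw [IntermediateField.minpoly_gen, hmin]
      have hsplit' : Splits (q.map (algebraMap F (IntermediateField.adjoin F {α}))) := by
        rw [← hgen]; exact hnorm.splits _
      have hsub : ∀ x ∈ q.rootSet L, x ∈ IntermediateField.adjoin F {α} := by
        intro x hx
        have hx0 : aeval x q = 0 := (mem_rootSet.mp hx).2
        have hxint : IsIntegral F x := ⟨q, hqm, by rwa [← aeval_def]⟩
        refine hxint.mem_intermediateField_of_minpoly_splits ?_
        rw [show minpoly F x = q from (minpoly.eq_of_irreducible_of_monic hq hx0 hqm).symm]
        exact hsplit'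
      obtain ⟨-, hadj⟩ := isSplittingField_iff_intermediateField.mp hL
      exact le_antisymm le_top (hadj ▸ IntermediateField.adjoin_le_iff.mpr hsub)
    have hfinrank : Module.finrank F L = q.natDegree := by
      rw [← IntermediateField.finrank_top', ← htop, IntermediateField.adjoin.finrank hint, hmin]
    have hcardGal : Fintype.card (L ≃ₐ[F] L) = q.natDegree := by
      rw [← Nat.card_eq_fintype_card, IsGalois.card_aut_eq_finrank, hfinrank]
    constructor
    · exact not_isUnit_of_natDegree_pos _ (by rw [hdegfactor α]; omega)
    · intro A B hAB
      by_contra hcon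
      push_neg at hcon
      obtain ⟨hA, hB⟩ := hcon
      have hA0 : A ≠ 0 := fun h => hfactor0 α (by rw [hAB, h, zero_mul])
      have hB0 : B ≠ 0 := fun h => hfactor0 α (by rw [hAB, h, mul_zero])
      have hdA : 0 < A.natDegree := natDegree_pos_of_not_isUnit hA0 hA
      have hdB : 0 < B.natDegree := natDegree_pos_of_not_isUnit hB0 hB
      have hdAB : A.natDegree + B.natDegree = f.natDegree := by
        rw [← hdegfactor α, hAB, natDegree_mul hA0 hB0]
      have hdAlt : A.natDegree < f.natDegree := by omega
      set N := Fintype.card (L ≃ₐ[F] L) with hN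
      set Abar := ∏ σ : L ≃ₐ[F] L, A.map (σ : L →+* L) with hAbar
      have hAbar0 : Abar ≠ 0 :=
        Finset.prod_ne_zero_iff.mpr fun σ _ => Polynomial.map_ne_zero hA0
      have hdegAbar : Abar.natDegree = N * A.natDegree := by
        rw [hAbar, natDegree_prod _ _ (fun (σ : L ≃ₐ[F] L) _ => Polynomial.map_ne_zero hA0)]
        simp [natDegree_map, hN, Finset.sum_const, Finset.card_univ]
      have hfix : ∀ τ : L ≃ₐ[F] L, Abar.map (τ : L →+* L) = Abar := by
        intro τ
        have h8 : Abar.map (τ : L →+* L) = ∏ σ : L ≃ₐ[F] L, (A.map (σ : L →+* L)).map (τ : L →+* L) := by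
          simp only [hAbar, ← coe_mapRingHom, map_prod]
        rw [h8]
        have h9 : ∀ σ : L ≃ₐ[F] L, (A.map (σ : L →+* L)).map (τ : L →+* L)
            = A.map ((τ * σ : L ≃ₐ[F] L) : L →+* L) := by
          intro σ
          rw [Polynomial.map_map]
          rfl
        rw [Finset.prod_congr rfl fun σ _ => h9 σ]
        exact Fintype.prod_equiv (Equiv.mulLeft τ) _ _ (fun σ => rfl)
      have hcoeffs : ∀ n, Abar.coeff n ∈ Set.range ι := by
        intro n
        have hfixc : ∀ τ : L ≃ₐ[F] L, τ (Abar.coeff n) = Abar.coeff n := by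
          intro τ
          conv_rhs => rw [← hfix τ]
          rw [coeff_map]
          rfl
        have hbot : IntermediateField.fixedField (⊤ : Subgroup (L ≃ₐ[F] L)) = ⊥ :=
          OrderIso.map_bot (@IsGalois.intermediateFieldEquivSubgroup F _ L _ _ _ _).symm
        have hmem : Abar.coeff n ∈ IntermediateField.fixedField (⊤ : Subgroup (L ≃ₐ[F] L)) :=
          fun g => hfixc g.1
        rw [hbot] at hmem
        exact IntermediateField.mem_bot.mp hmem
      obtain ⟨A₀, hA₀⟩ := (Polynomial.mem_lifts _).mp
        ((Polynomial.lifts_iff_coeff_lifts _).mpr hcoeffs)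
      have hAd : A ∣ Abar := by
        have h1A : A.map ((1 : L ≃ₐ[F] L) : L →+* L) = A := by
          have h2A : ((1 : L ≃ₐ[F] L) : L →+* L) = RingHom.id L := RingHom.ext fun x => rfl
          rw [h2A, Polynomial.map_id]
        have h3A : A.map ((1 : L ≃ₐ[F] L) : L →+* L)
            ∣ ∏ σ : L ≃ₐ[F] L, A.map ((σ : L →+* L)) :=
          Finset.dvd_prod_of_mem (fun σ : L ≃ₐ[F] L => A.map ((σ : L →+* L)))
            (Finset.mem_univ 1)
        rw [h1A] at h3A
        rw [hAbar]
        exact h3A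
      have hQfix : ∀ σ : L ≃ₐ[F] L, (Q.map ι).map (σ : L →+* L) = Q.map ι := by
        intro σ; rw [Polynomial.map_map, hcomm σ]
      have hAdvdQ : A ∣ Q.map ι := by
        refine dvd_trans ⟨B, hAB⟩ ?_
        rw [hE]
        exact Multiset.dvd_prod (Multiset.mem_map_of_mem _ hαs)
      have hAbardvd : Abar ∣ (Q.map ι) ^ N := by
        have h10 : (Q.map ι) ^ N = ∏ _σ : L ≃ₐ[F] L, Q.map ι := by
          rw [Finset.prod_const, Finset.card_univ]
        rw [h10, hAbar]
        refine Finset.prod_dvd_prod_of_dvd _ _ fun σ _ => ?_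
        rw [← hQfix σ]
        exact map_dvd (mapRingHom (σ : L →+* L)) hAdvdQ
      have hA₀dvd : A₀ ∣ Q ^ N := by
        rw [← Polynomial.map_dvd_map' ι, Polynomial.map_pow, hA₀]
        exact hAbardvd
      have hQprime : Prime Q := UniqueFactorizationMonoid.irreducible_iff_prime.mp h1
      obtain ⟨j, hjle, hassoc⟩ := (dvd_prime_pow hQprime N).mp hA₀dvd
      have hdegA₀ : A₀.natDegree = N * A.natDegree := by
        rw [← natDegree_map (p := A₀) ι, hA₀, hdegAbar]
      have hA₀0 : A₀ ≠ 0 := by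
        intro h
        rw [h, Polynomial.map_zero] at hA₀
        exact hAbar0 hA₀.symm
      obtain ⟨u, hu⟩ := hassoc
      have hu0 : (u : F[X]) ≠ 0 := u.isUnit.ne_zero
      have hdegu : (u : F[X]).natDegree = 0 :=
        natDegree_eq_of_degree_eq_some (isUnit_iff_degree_eq_zero.mp u.isUnit)
      have harith : N * A.natDegree = j * Q.natDegree := by
        rw [← hdegA₀]
        have h11 := congrArg natDegree hu
        rwa [natDegree_mul hA₀0 hu0, hdegu, add_zero, natDegree_pow] at h11
      rw [hcardGal, hdegQ] at harith
      rcases Nat.eq_zero_or_pos j with rfl | hj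
      · rw [zero_mul] at harith
        rcases Nat.mul_eq_zero.mp harith with h | h <;> omega
      · have h12 : q.natDegree * A.natDegree < q.natDegree * f.natDegree :=
          Nat.mul_lt_mul_of_le_of_lt (le_refl _) hdAlt (by omega)
        have h13 : q.natDegree * f.natDegree ≤ j * (q.natDegree * f.natDegree) :=
          Nat.le_mul_of_pos_left _ hj
        omega
  · intro h1
    constructor
    · refine not_isUnit_of_natDegree_pos _ ?_
      rw [hdegQ]
      exact Nat.mul_pos (by omega) (by omega)
    · intro a b hab
      by_contra hcon
      push_neg at hcon
      obtain ⟨ha, hb⟩ := hcon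
      have ha0 : a ≠ 0 := fun h => hQ0 (by rw [hab, h, zero_mul])
      have hb0 : b ≠ 0 := fun h => hQ0 (by rw [hab, h, mul_zero])
      have hda : 0 < a.natDegree := natDegree_pos_of_not_isUnit ha0 ha
      have hdb : 0 < b.natDegree := natDegree_pos_of_not_isUnit hb0 hb
      have hdab : a.natDegree + b.natDegree = Q.natDegree := by
        rw [hab, natDegree_mul ha0 hb0]
      set aL := a.map ι with haL
      have haL0 : aL ≠ 0 := Polynomial.map_ne_zero ha0
      have haLdvd : aL ∣ Q.map ι := map_dvd (mapRingHom ι) ⟨b, hab⟩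
      have haLnonunit : ¬ IsUnit aL :=
        not_isUnit_of_natDegree_pos _ (by rw [haL, natDegree_map]; omega)
      obtain ⟨r, hr, hrdvd⟩ :=
        WfDvdMonoid.exists_irreducible_factor haLnonunit haL0
      have hrQ : r ∣ (s.map (fun β => fL - C β * gL)).prod := by
        rw [← hE]; exact hrdvd.trans haLdvd
      obtain ⟨x, hx, hrx⟩ :=
        (UniqueFactorizationMonoid.irreducible_iff_prime.mp hr).exists_mem_multiset_dvd hrQ
      obtain ⟨β, hβs, rfl⟩ := Multiset.mem_map.mp hx
      have hfacβ : (fL - C β * gL) ∣ aL :=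
        ((hr.associated_of_dvd (hirrfactor h1 β hβs) hrx).symm.dvd).trans hrdvd
      have haLfix : ∀ σ : L ≃ₐ[F] L, aL.map (σ : L →+* L) = aL := by
        intro σ; rw [haL, Polynomial.map_map, hcomm σ]
      have hall : ∀ γ ∈ s, (fL - C γ * gL) ∣ aL := by
        intro γ hγ
        obtain ⟨σ, hσ⟩ := hconj β hβs γ hγ
        have h14 := map_dvd (mapRingHom (σ : L →+* L)) hfacβ
        simp only [coe_mapRingHom] at h14
        rwa [hmapσ σ β, hσ, haLfix σ] at h14
      have hproddvd : (s.map (fun β => fL - C β * gL)).prod ∣ aL := by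
        have h7 : ∏ β ∈ (⟨s, hnodup⟩ : Finset L), (fL - C β * gL)
            = (s.map (fun β => fL - C β * gL)).prod := rfl
        rw [← h7]
        refine Finset.prod_dvd_of_coprime ?_ fun β hβ => hall β (by simpa using hβ)
        intro β hβ γ hγ hne
        exact hcop β γ hne
      have hdegle : (Q.map ι).natDegree ≤ aL.natDegree := by
        rw [hE]; exact natDegree_le_of_dvd hproddvd haL0
      rw [natDegree_map, haL, natDegree_map] at hdegle
      omega
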